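/- Let U = (u_d) ∈ E_{D,p}(r) and U' = (u'_d) ∈ E_{D,p}(r') be two minimal solutions with φ_U(0) = φ_{U'}(0). Define V = (v_d)_{d∈D} by v_d := p^r·u'_d + u_d. Then V is a minimal element of E_{D,p}(r + r'), and its support satisfies φ_V(i) = φ_{U'}(i) for 0 ≤ i ≤ r' and φ_V(i + r') = φ_U(i) for 1 ≤ i ≤ r − 1 (indices taken in ℤ/(r+r')ℤ). -/

import Mathlib

open scoped BigOperators
open scoped Classical

/-- `sp p u` is the sum of the base-`p` digits of `u`. -/
def sp (p u : ℕ) : ℕ := (Nat.digits p u).sum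

variable {ι : Type} [Fintype ι]

/-- The coordinatewise sum `Σ_{d ∈ D} u_d · d`. -/
def sigmaSum (D : Finset (ι → ℕ)) (U : D → ℕ) (k : ι) : ℕ :=
  ∑ d, U d * (d : ι → ℕ) k

/-- Membership in the set `E_{D,p}(r)`. -/
def memE (p : ℕ) (D : Finset (ι → ℕ)) (r : ℕ) (U : D → ℕ) : Prop :=
  (∀ d, U d ≤ p ^ r - 1) ∧
  (∀ k, (p ^ r - 1) ∣ sigmaSum D U k ∧ 0 < sigmaSum D U k)

/-- The `p`-weight `s_p(U)` of a tuple `U`. -/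
def spU (p : ℕ) (D : Finset (ι → ℕ)) (U : D → ℕ) : ℕ := ∑ d, sp p (U d)

/-- `s_{D,p}(r)`, the minimal `p`-weight of an element of `E_{D,p}(r)`. -/
noncomputable def sDp (p : ℕ) (D : Finset (ι → ℕ)) (r : ℕ) : ℕ :=
  sInf { s | ∃ U : D → ℕ, memE p D r U ∧ spU p D U = s }

/-- The `p`-density `δ_p(D)` of the set `D`. -/
noncomputable def density (p : ℕ) (D : Finset (ι → ℕ)) : ℝ :=
  (1 / ((p : ℝ) - 1)) * sInf { x : ℝ | ∃ r : ℕ, 1 ≤ r ∧ x = (sDp p D r : ℝ) / (r : ℝ) }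

/-- A minimal solution in `E_{D,p}(r)`. -/
def minimalSol (p : ℕ) (D : Finset (ι → ℕ)) (r : ℕ) (U : D → ℕ) : Prop :=
  memE p D r U ∧ (spU p D U : ℝ) = ((p : ℝ) - 1) * (r : ℝ) * density p D

/-- `φ_r(U) = (1/(p^r − 1)) Σ_{d ∈ D} u_d · d`. -/
def phiMap (p : ℕ) (D : Finset (ι → ℕ)) (r : ℕ) (U : D → ℕ) (k : ι) : ℕ :=
  sigmaSum D U k / (p ^ r - 1)

/-- The shift `δ_r` on `{0, …, p^r − 1}`. -/
def shiftFun (p r u : ℕ) : ℕ := if u = p ^ r - 1 then u else (p * u) % (p ^ r - 1)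

/-- The componentwise action of the shift `δ_r` on tuples. -/
def shiftE (p : ℕ) (D : Finset (ι → ℕ)) (r : ℕ) (U : D → ℕ) : D → ℕ :=
  fun d => shiftFun p r (U d)

/-- The support `φ_U : ℤ/rℤ → ℕ^n` of a solution `U ∈ E_{D,p}(r)`. -/
def suppMap (p : ℕ) (D : Finset (ι → ℕ)) (r : ℕ) (U : D → ℕ) (k : ZMod r) : ι → ℕ :=
  phiMap p D r ((shiftE p D r)^[k.val] U)

/-- Membership in `MI_{D,p}(r)`: minimal irreducible solutions. -/
def memMI (p : ℕ) (D : Finset (ι → ℕ)) (r : ℕ) (U : D → ℕ) : Prop :=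
  minimalSol p D r U ∧ Function.Injective (suppMap p D r U)

/-- The `p`-minimal support `Σ_p(D)`. -/
def minSupport (p : ℕ) (D : Finset (ι → ℕ)) : Set (ι → ℕ) :=
  { e | ∃ r : ℕ, 1 ≤ r ∧ ∃ U : D → ℕ, memMI p D r U ∧ e ∈ Set.range (suppMap p D r U) }

/-- `ψ(U)`: the tuple of last base-`p` digits of `U`. -/
def psiMap (p : ℕ) (D : Finset (ι → ℕ)) (U : D → ℕ) : D → ℕ := fun d => U d % p

/-- The set `V(e, e')` of digit tuples of minimal irreducible solutions with
`φ_U(−1) = e` and `φ_U(0) = e'`. -/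
def Vset (p : ℕ) (D : Finset (ι → ℕ)) (e e' : ι → ℕ) : Set (D → ℕ) :=
  { v | ∃ r : ℕ, 1 ≤ r ∧ ∃ U : D → ℕ, memMI p D r U ∧
      suppMap p D r U (-1) = e ∧ suppMap p D r U 0 = e' ∧ psiMap p D U = v }

/-- The weight `w(V) = Σ_{d ∈ D} v_d`. -/
def weightV (D : Finset (ι → ℕ)) (v : D → ℕ) : ℕ := ∑ d, v d

section AuxGlue

/-- digit-sum additivity for gluing. -/
lemma sp_glue_aux {p : ℕ} (hp : 1 < p) {r a b : ℕ} (ha : a < p ^ r) :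
    sp p (a + p ^ r * b) = sp p a + sp p b := by
  rcases Nat.eq_zero_or_pos b with rfl | hb
  · simp [sp]
  · have hlen : (Nat.digits p a).length ≤ r := by
      rcases Nat.eq_zero_or_pos a with rfl | ha0
      · simp
      · rw [Nat.digits_len p a hp ha0.ne']
        have := (Nat.log_lt_iff_lt_pow hp ha0.ne').mpr ha
        omega
    have h := Nat.digits_append_zeroes_append_digits
      (b := p) (k := r - (Nat.digits p a).length) (m := b) (n := a) hp hb
    rw [Nat.add_sub_cancel' hlen] at h
    unfold sp
    rw [← h]
    simp

lemma mul_pred_add (a b : ℕ) : a * (b - 1) + a = a * b ∨ b = 0 := by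
  cases b with
  | zero => exact Or.inr rfl
  | succ n => left; rw [Nat.succ_sub_one, Nat.mul_succ]

lemma mul_pred_add' (a b : ℕ) (hb : 1 ≤ b) : a * (b - 1) + a = a * b := by
  rcases mul_pred_add a b with h | h
  · exact h
  · omega

lemma pred_mul_add' (a b : ℕ) (hb : 1 ≤ b) : (b - 1) * a + a = b * a := by
  rw [Nat.mul_comm (b-1) a, Nat.mul_comm b a]; exact mul_pred_add' a b hb

/-- basic bound: if `a ≤ A - 1` and `c ≤ B - 1` then `B * a + c ≤ A * B - 1`. -/
lemma bd_aux {A B a c : ℕ} (hA : 1 ≤ A) (hB : 1 ≤ B) (ha : a ≤ A - 1) (hc : c ≤ B - 1) :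
    B * a + c ≤ A * B - 1 := by
  have h1 : B * a ≤ B * (A - 1) := Nat.mul_le_mul_left _ ha
  have h2 : B * (A - 1) + B = B * A := mul_pred_add' B A hA
  have h4 : B * A = A * B := Nat.mul_comm _ _
  omega

lemma shiftFun_step {p s : ℕ} (hp : 1 < p) (hs : 1 ≤ s) {w : ℕ} (hw : w ≤ p ^ s - 1) :
    shiftFun p s w = p * (w % p ^ (s - 1)) + w / p ^ (s - 1) := by
  have hq1 : 1 ≤ p ^ (s - 1) := Nat.one_le_pow _ _ (by omega)
  have hps : p ^ s = p ^ (s - 1) * p := by rw [← pow_succ]; congr 1; omega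
  have hps1 : 1 ≤ p ^ s := Nat.one_le_pow _ _ (by omega)
  have hle1 : p ^ (s - 1) ≤ p ^ (s - 1) * p := Nat.le_mul_of_pos_right _ (by omega)
  have hple : p ≤ p * p ^ (s - 1) := Nat.le_mul_of_pos_right _ (by omega)
  have hwdm : p ^ (s - 1) * (w / p ^ (s - 1)) + w % p ^ (s - 1) = w := Nat.div_add_mod w _
  have hmod : w % p ^ (s - 1) < p ^ (s - 1) := Nat.mod_lt _ (by omega)
  have hwlt : w < p ^ s := by omega
  have hdiv : w / p ^ (s - 1) < p := Nat.div_lt_of_lt_mul (hps ▸ hwlt)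
  by_cases hmax : w = p ^ s - 1
  · have hms : p ^ (s - 1) * (p - 1) + p ^ (s - 1) = p ^ (s - 1) * p := mul_pred_add' _ _ (by omega)
    have e1 : p ^ (s - 1) * (p - 1) + (p ^ (s - 1) - 1) = w := by omega
    have hmodeq : w % p ^ (s - 1) = p ^ (s - 1) - 1 := by
      rw [← e1, Nat.mul_add_mod]
      exact Nat.mod_eq_of_lt (by omega)
    have hdiveq : w / p ^ (s - 1) = p - 1 := by
      rw [← e1, Nat.mul_add_div (by omega), Nat.div_eq_of_lt (by omega)]
      omega
    simp only [shiftFun]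
    rw [if_pos hmax, hmodeq, hdiveq]
    have e2 : p * (p ^ (s - 1) - 1) + p = p * p ^ (s - 1) := mul_pred_add' _ _ hq1
    have e3 : p * p ^ (s - 1) = p ^ (s - 1) * p := Nat.mul_comm _ _
    omega
  · simp only [shiftFun]
    rw [if_neg hmax]
    set a := w % p ^ (s - 1) with hadef
    set c := w / p ^ (s - 1) with hcdef
    have hbd : p * a + c ≤ p ^ (s - 1) * p - 1 :=
      bd_aux hq1 (by omega) (Nat.le_sub_one_of_lt hmod) (Nat.le_sub_one_of_lt hdiv)
    have hne : p * a + c ≠ p ^ s - 1 := by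
      intro heq
      have hx : p * (p ^ (s - 1) - 1) + p = p * p ^ (s - 1) := mul_pred_add' _ _ hq1
      have hcomm : p * p ^ (s - 1) = p ^ (s - 1) * p := Nat.mul_comm _ _
      have h1 : p * (p ^ (s - 1) - 1) ≤ p * a := by omega
      have h2 : p ^ (s - 1) - 1 ≤ a := Nat.le_of_mul_le_mul_left h1 (by omega)
      have h3 : a = p ^ (s - 1) - 1 := by omega
      have h4' : p * a = p * (p ^ (s - 1) - 1) := by rw [h3]
      have h4 : c = p - 1 := by omega
      have h5 : p ^ (s - 1) * (p - 1) + p ^ (s - 1) = p ^ (s - 1) * p := mul_pred_add' _ _ (by omega)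
      have h6 : w = p ^ (s - 1) * (p - 1) + (p ^ (s - 1) - 1) := by rw [← hwdm, h3, h4]
      omega
    have h7 : p * w = p ^ s * c + p * a := by
      rw [← hwdm, hps]; ring
    have h5 : (p ^ s - 1) * c + c = p ^ s * c := pred_mul_add' _ _ (by omega)
    have h6 : c ≤ p ^ s * c := Nat.le_mul_of_pos_left c (by omega)
    have e3 : p * w = (p ^ s - 1) * c + (p * a + c) := by omega
    rw [e3, Nat.mul_add_mod]
    exact Nat.mod_eq_of_lt (by omega)

lemma shiftFun_iter {p s : ℕ} (hp : 1 < p) (hs : 1 ≤ s) :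
    ∀ (i : ℕ), i ≤ s → ∀ {w : ℕ}, w ≤ p ^ s - 1 →
      (shiftFun p s)^[i] w = p ^ i * (w % p ^ (s - i)) + w / p ^ (s - i) := by
  intro i
  induction i with
  | zero =>
    intro _ w hw
    have h1 : 1 ≤ p ^ s := Nat.one_le_pow _ _ (by omega)
    simp [Nat.mod_eq_of_lt (show w < p ^ s by omega),
      Nat.div_eq_of_lt (show w < p ^ s by omega)]
  | succ i ih =>
    intro hi w hw
    have hi' : i ≤ s := by omega
    set M := p ^ (s - i) with hM
    set N := p ^ (s - i - 1) with hN
    have hN1 : 1 ≤ N := Nat.one_le_pow _ _ (by omega)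
    have hMN : M = N * p := by rw [hM, hN, ← pow_succ]; congr 1; omega
    have hpi1 : 1 ≤ p ^ i := Nat.one_le_pow _ _ (by omega)
    set a := w % M with hadef
    set c := w / M with hcdef
    have hM1 : 1 ≤ M := Nat.one_le_pow _ _ (by omega)
    have haM : a < M := Nat.mod_lt _ (by omega)
    have hMpi : M * p ^ i = p ^ s := by rw [hM, ← pow_add]; congr 1; omega
    have hps1 : 1 ≤ p ^ s := Nat.one_le_pow _ _ (by omega)
    have hcp : c < p ^ i := Nat.div_lt_of_lt_mul (by omega)
    set a₀ := a % N with ha0def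
    set a₁ := a / N with ha1def
    have ha0N : a₀ < N := Nat.mod_lt _ (by omega)
    have ha1p : a₁ < p := Nat.div_lt_of_lt_mul (by omega)
    have hadm : N * a₁ + a₀ = a := Nat.div_add_mod a N
    have hwdm : M * c + a = w := Nat.div_add_mod w M
    rw [Function.iterate_succ_apply', ih hi' hw]
    have hprod : N * p ^ i = p ^ (s - 1) := by rw [hN, ← pow_add]; congr 1; omega
    have hxdec : p ^ i * a + c = p ^ (s - 1) * a₁ + (p ^ i * a₀ + c) := by
      rw [← hadm, ← hprod]; ring
    have hy : p ^ i * a₀ + c ≤ p ^ (s - 1) - 1 := by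
      have h4 := bd_aux (A := N) (B := p ^ i) hN1 hpi1 (Nat.le_sub_one_of_lt ha0N) (Nat.le_sub_one_of_lt hcp)
      omega
    have hs1 : 1 ≤ p ^ (s - 1) := Nat.one_le_pow _ _ (by omega)
    have hxle : p ^ i * a + c ≤ p ^ s - 1 := by
      have h4 := bd_aux (A := M) (B := p ^ i) hM1 hpi1 (Nat.le_sub_one_of_lt haM) (Nat.le_sub_one_of_lt hcp)
      omega
    rw [shiftFun_step hp hs hxle]
    have hmodx : (p ^ i * a + c) % p ^ (s - 1) = p ^ i * a₀ + c := by
      rw [hxdec, Nat.mul_add_mod]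
      exact Nat.mod_eq_of_lt (by omega)
    have hdivx : (p ^ i * a + c) / p ^ (s - 1) = a₁ := by
      rw [hxdec, Nat.mul_add_div (by omega), Nat.div_eq_of_lt (by omega), Nat.add_zero]
    rw [hmodx, hdivx]
    have hsN : s - (i + 1) = s - i - 1 := by omega
    have hw0 : w % p ^ (s - (i + 1)) = a₀ := by
      rw [hsN, ← hN, ha0def, hadef]
      exact (Nat.mod_mod_of_dvd w (by rw [hMN]; exact Dvd.intro p rfl)).symm
    have hwd : w = N * (p * c + a₁) + a₀ := by
      have e1 : N * (p * c + a₁) = N * (p * c) + N * a₁ := by ring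
      have e2 : M * c = N * (p * c) := by rw [hMN]; ring
      omega
    have hw1 : w / p ^ (s - (i + 1)) = p * c + a₁ := by
      rw [hsN, ← hN, hwd, Nat.mul_add_div (by omega), Nat.div_eq_of_lt (by omega), Nat.add_zero]
    rw [hw0, hw1, pow_succ]
    ring

variable {ι : Type} [Fintype ι]

lemma shiftE_iter (p : ℕ) (D : Finset (ι → ℕ)) (s : ℕ) (i : ℕ) (W : D → ℕ) :
    (shiftE p D s)^[i] W = fun d => (shiftFun p s)^[i] (W d) := by
  induction i with
  | zero => rfl
  | succ n ih =>
    funext d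
    rw [Function.iterate_succ_apply', ih]
    simp [shiftE, Function.iterate_succ_apply']

/-- Key computation: value of `φ` after `i` shifts. -/
lemma phi_shift_eq {p : ℕ} (hp : 1 < p) {s : ℕ} (hs : 1 ≤ s) (D : Finset (ι → ℕ))
    (W : D → ℕ) (e : ι → ℕ) (hWb : ∀ d, W d ≤ p ^ s - 1)
    (hS : ∀ k, sigmaSum D W k = (p ^ s - 1) * e k)
    {i : ℕ} (hi : i ≤ s) (k : ι) :
    (∑ d, (W d / p ^ (s - i)) * (d : ι → ℕ) k) ≤ p ^ i * e k ∧
    phiMap p D s ((shiftE p D s)^[i] W) k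
      = p ^ i * e k - (∑ d, (W d / p ^ (s - i)) * (d : ι → ℕ) k) := by
  have hps1 : 1 < p ^ s := Nat.one_lt_pow (by omega) hp
  set M := p ^ (s - i) with hM
  set B := ∑ d, (W d / M) * (d : ι → ℕ) k with hB
  set C := ∑ d, (W d % M) * (d : ι → ℕ) k with hC
  have hMpi : p ^ i * M = p ^ s := by rw [hM, ← pow_add]; congr 1; omega
  have hsig : sigmaSum D ((shiftE p D s)^[i] W) k = p ^ i * C + B := by
    rw [shiftE_iter]
    unfold sigmaSum
    have : ∀ d : D, (shiftFun p s)^[i] (W d) * (d : ι → ℕ) k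
        = p ^ i * ((W d % M) * (d : ι → ℕ) k) + (W d / M) * (d : ι → ℕ) k := by
      intro d
      rw [shiftFun_iter hp hs i hi (hWb d)]
      ring
    rw [Finset.sum_congr rfl (fun d _ => this d), Finset.sum_add_distrib, ← Finset.mul_sum]
  have hWsplit : (p ^ s - 1) * e k = M * B + C := by
    rw [← hS k]
    unfold sigmaSum
    have : ∀ d : D, W d * (d : ι → ℕ) k
        = M * ((W d / M) * (d : ι → ℕ) k) + (W d % M) * (d : ι → ℕ) k := by
      intro d
      conv_lhs => rw [← Nat.div_add_mod (W d) M]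
      ring
    rw [Finset.sum_congr rfl (fun d _ => this d), Finset.sum_add_distrib, ← Finset.mul_sum]
  have hkey : sigmaSum D ((shiftE p D s)^[i] W) k + (p ^ s - 1) * B
      = (p ^ s - 1) * (p ^ i * e k) := by
    have h2 : (p ^ s - 1) * (p ^ i * e k) = p ^ i * ((p ^ s - 1) * e k) := by ring
    rw [hsig, h2, hWsplit]
    have h4 : p ^ i * (M * B + C) = p ^ s * B + p ^ i * C := by rw [← hMpi]; ring
    have h5 : (p ^ s - 1) * B + B = p ^ s * B := pred_mul_add' _ _ (by omega)
    have h6 : B ≤ p ^ s * B := Nat.le_mul_of_pos_left B (by omega)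
    omega
  have hBle : B ≤ p ^ i * e k := by
    have h1 : (p ^ s - 1) * B ≤ (p ^ s - 1) * (p ^ i * e k) := by omega
    exact Nat.le_of_mul_le_mul_left h1 (by omega)
  refine ⟨hBle, ?_⟩
  have hsub : sigmaSum D ((shiftE p D s)^[i] W) k = (p ^ s - 1) * (p ^ i * e k - B) := by
    have hXB : (p ^ i * e k - B) + B = p ^ i * e k := Nat.sub_add_cancel hBle
    have hexp : (p ^ s - 1) * (p ^ i * e k - B) + (p ^ s - 1) * B
        = (p ^ s - 1) * (p ^ i * e k) := by rw [← Nat.mul_add, hXB]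
    omega
  unfold phiMap
  rw [hsub, Nat.mul_div_cancel_left _ (by omega)]

end AuxGlue

/-- Gluing two minimal solutions with matching supports at `0` yields a minimal
solution of length `r + r'`, with support obtained by concatenation. -/
theorem glue_minimal (p : ℕ) (hp : p.Prime) {ι : Type} [Fintype ι] [Nonempty ι]
    (D : Finset (ι → ℕ)) (hD : D.Nonempty)
    (hcoord : ∀ k : ι, ∃ d ∈ D, 0 < d k)
    (r r' : ℕ) (hr : 1 ≤ r) (hr' : 1 ≤ r')
    (U U' : D → ℕ) (hU : minimalSol p D r U) (hU' : minimalSol p D r' U')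
    (h0 : suppMap p D r U 0 = suppMap p D r' U' 0)
    (V : D → ℕ) (hV : V = fun d => p ^ r * U' d + U d) :
    minimalSol p D (r + r') V ∧
    (∀ i : ℕ, i ≤ r' →
      suppMap p D (r + r') V ((i : ℕ) : ZMod (r + r')) = suppMap p D r' U' ((i : ℕ) : ZMod r')) ∧
    (∀ i : ℕ, 1 ≤ i → i ≤ r - 1 →
      suppMap p D (r + r') V (((i + r' : ℕ)) : ZMod (r + r')) = suppMap p D r U ((i : ℕ) : ZMod r)) := by
  subst hV
  have hp1 : 1 < p := hp.one_lt
  haveI : NeZero r := ⟨by omega⟩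
  haveI : NeZero r' := ⟨by omega⟩
  haveI : NeZero (r + r') := ⟨by omega⟩
  have hpr : 1 < p ^ r := Nat.one_lt_pow (by omega) hp1
  have hpr' : 1 < p ^ r' := Nat.one_lt_pow (by omega) hp1
  have hpR : 1 < p ^ (r + r') := Nat.one_lt_pow (by omega) hp1
  have hpadd : p ^ (r + r') = p ^ r * p ^ r' := pow_add p r r'
  set e : ι → ℕ := fun k => sigmaSum D U k / (p ^ r - 1) with he
  have hSU : ∀ k, sigmaSum D U k = (p ^ r - 1) * e k := fun k =>
    (Nat.mul_div_cancel' (hU.1.2 k).1).symm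
  have h0' : phiMap p D r U = phiMap p D r' U' := by
    have h1 : suppMap p D r U 0 = phiMap p D r U := by
      unfold suppMap; rw [ZMod.val_zero, Function.iterate_zero_apply]
    have h2 : suppMap p D r' U' 0 = phiMap p D r' U' := by
      unfold suppMap; rw [ZMod.val_zero, Function.iterate_zero_apply]
    rw [← h1, ← h2, h0]
  have hSU' : ∀ k, sigmaSum D U' k = (p ^ r' - 1) * e k := by
    intro k
    have h3 : phiMap p D r' U' k = e k := by rw [← h0']; rfl
    rw [← h3]
    exact (Nat.mul_div_cancel' (hU'.1.2 k).1).symm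
  have hepos : ∀ k, 1 ≤ e k := by
    intro k
    by_contra h
    have h1 : e k = 0 := by omega
    have h2 := (hU.1.2 k).2
    rw [hSU k, h1, Nat.mul_zero] at h2
    exact absurd h2 (lt_irrefl 0)
  have key : p ^ r * (p ^ r' - 1) + (p ^ r - 1) = p ^ (r + r') - 1 := by
    have h1 : p ^ r * (p ^ r' - 1) + p ^ r = p ^ r * p ^ r' := mul_pred_add' _ _ (by omega)
    omega
  have hVb : ∀ d : D, p ^ r * U' d + U d ≤ p ^ (r + r') - 1 := by
    intro d
    have h1 := hU.1.1 d
    have h2 := hU'.1.1 d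
    have h3 : p ^ r * U' d ≤ p ^ r * (p ^ r' - 1) := Nat.mul_le_mul_left _ h2
    omega
  have hSV : ∀ k, sigmaSum D (fun d => p ^ r * U' d + U d) k = (p ^ (r + r') - 1) * e k := by
    intro k
    have hlin : sigmaSum D (fun d => p ^ r * U' d + U d) k
        = p ^ r * sigmaSum D U' k + sigmaSum D U k := by
      unfold sigmaSum
      rw [Finset.mul_sum, ← Finset.sum_add_distrib]
      exact Finset.sum_congr rfl (fun d _ => by ring)
    rw [hlin, hSU k, hSU' k, ← key]
    ring
  have hmemV : memE p D (r + r') (fun d => p ^ r * U' d + U d) := by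
    refine ⟨hVb, fun k => ?_⟩
    rw [hSV k]
    exact ⟨Dvd.intro _ rfl, Nat.mul_pos (by omega) (hepos k)⟩
  have hminV : minimalSol p D (r + r') (fun d => p ^ r * U' d + U d) := by
    refine ⟨hmemV, ?_⟩
    have hwV : spU p D (fun d => p ^ r * U' d + U d) = spU p D U + spU p D U' := by
      unfold spU
      rw [← Finset.sum_add_distrib]
      refine Finset.sum_congr rfl (fun d _ => ?_)
      have h1 : U d < p ^ r := by have := hU.1.1 d; omega
      calc sp p (p ^ r * U' d + U d) = sp p (U d + p ^ r * U' d) := by rw [Nat.add_comm]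
        _ = sp p (U d) + sp p (U' d) := sp_glue_aux hp1 h1
    rw [hwV]
    push_cast
    rw [hU.2, hU'.2]
    push_cast
    ring
  refine ⟨hminV, ?_, ?_⟩
  · -- first part : 0 ≤ i ≤ r'
    intro i hi
    funext k
    unfold suppMap
    rw [ZMod.val_natCast_of_lt (show i < r + r' by omega)]
    have hL := (phi_shift_eq hp1 (show 1 ≤ r + r' by omega) D
      (fun d => p ^ r * U' d + U d) e hVb hSV (show i ≤ r + r' by omega) k).2
    rcases Nat.lt_or_ge i r' with hilt | hige
    · rw [ZMod.val_natCast_of_lt hilt]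
      have hRr := (phi_shift_eq hp1 hr' D U' e hU'.1.1 hSU' (show i ≤ r' by omega) k).2
      rw [hL, hRr]
      congr 1
      refine Finset.sum_congr rfl (fun d _ => ?_)
      have h1 : U d < p ^ r := by have := hU.1.1 d; omega
      have hsplit : p ^ (r + r' - i) = p ^ r * p ^ (r' - i) := by
        rw [← pow_add]; congr 1; omega
      rw [hsplit, ← Nat.div_div_eq_div_mul, Nat.mul_add_div (by omega),
        Nat.div_eq_of_lt h1, Nat.add_zero]
    · -- i = r'
      have hieq : r' = i := by omega
      subst hieq
      rw [ZMod.natCast_self, ZMod.val_zero]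
      have hRr : phiMap p D r' ((shiftE p D r')^[0] U') k = e k := by
        show phiMap p D r' U' k = e k
        unfold phiMap
        rw [hSU' k]
        exact Nat.mul_div_cancel_left _ (by omega)
      rw [hL, hRr]
      have hBV : (∑ d, ((p ^ r * U' d + U d) / p ^ (r + r' - r')) * (d : ι → ℕ) k)
          = sigmaSum D U' k := by
        unfold sigmaSum
        refine Finset.sum_congr rfl (fun d _ => ?_)
        have h1 : U d < p ^ r := by have := hU.1.1 d; omega
        have hsplit : r + r' - r' = r := by omega
        rw [hsplit, Nat.mul_add_div (by omega), Nat.div_eq_of_lt h1, Nat.add_zero]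
      rw [hBV, hSU' k]
      have h2 : (p ^ r' - 1) * e k + e k = p ^ r' * e k := pred_mul_add' _ _ (by omega)
      have h3 : p ^ r' * e k = p ^ r' * e k := rfl
      omega
  · -- second part : 1 ≤ i ≤ r - 1
    intro i hi1 hi2
    funext k
    unfold suppMap
    rw [ZMod.val_natCast_of_lt (show i + r' < r + r' by omega),
      ZMod.val_natCast_of_lt (show i < r by omega)]
    have hL := (phi_shift_eq hp1 (show 1 ≤ r + r' by omega) D
      (fun d => p ^ r * U' d + U d) e hVb hSV (show i + r' ≤ r + r' by omega) k).2
    have hRU := phi_shift_eq hp1 hr D U e hU.1.1 hSU (show i ≤ r by omega) k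
    rw [hL, hRU.2]
    have hBV : (∑ d, ((p ^ r * U' d + U d) / p ^ (r + r' - (i + r'))) * (d : ι → ℕ) k)
        = p ^ i * sigmaSum D U' k + (∑ d, (U d / p ^ (r - i)) * (d : ι → ℕ) k) := by
      have hexp : r + r' - (i + r') = r - i := by omega
      rw [hexp]
      unfold sigmaSum
      rw [Finset.mul_sum, ← Finset.sum_add_distrib]
      refine Finset.sum_congr rfl (fun d _ => ?_)
      have hd : p ^ r * U' d = p ^ (r - i) * (p ^ i * U' d) := by
        rw [← Nat.mul_assoc, ← pow_add]; congr 2; omega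
      rw [hd, Nat.mul_add_div (Nat.pow_pos (by omega))]
      ring
    rw [hBV, hSU' k]
    have h1 : p ^ (i + r') * e k = p ^ i * ((p ^ r' - 1) * e k) + p ^ i * e k := by
      have h2 : (p ^ r' - 1) * e k + e k = p ^ r' * e k := pred_mul_add' _ _ (by omega)
      calc p ^ (i + r') * e k = p ^ i * (p ^ r' * e k) := by rw [pow_add]; ring
        _ = p ^ i * ((p ^ r' - 1) * e k + e k) := by rw [h2]
        _ = p ^ i * ((p ^ r' - 1) * e k) + p ^ i * e k := by ring
    have hble := hRU.1
    omega
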